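/- Let ε ∈ ℝ and k₃ ≠ 0. On any open interval I containing 0 on which 1 − k₃ s⁴ > 0 and 1 + 2ε ∫₀ˢ (1 − k₃ σ⁴)^{1/4} dσ > 0, the function φ(s) := √( 1 + 2ε ∫₀ˢ (1 − k₃ σ⁴)^{1/4} dσ ) satisfies equation (E) with parameters (k₁, k₂, k₃) = (0, 0, k₃), i.e. −s k₃ s² (φφ' − s φ'² − s φφ'') − (φ'² + φφ'') = 0 on I; moreover φ(0) = 1 and φ'(0) = ε. -/

import Mathlib

/-- Equation (E) with parameters `k₁ k₂ k₃` for a real function `φ` at the point `s`: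
`s(k₂ − k₃ s²)(φφ' − s φ'² − s φφ'') − (φ'² + φφ'') + k₁ φ(φ − s φ') = 0`. -/
def eqE (k₁ k₂ k₃ : ℝ) (φ : ℝ → ℝ) (s : ℝ) : Prop :=
  s * (k₂ - k₃ * s ^ 2) *
      (φ s * deriv φ s - s * (deriv φ s) ^ 2 - s * φ s * deriv (deriv φ) s) -
    ((deriv φ s) ^ 2 + φ s * deriv (deriv φ) s) +
    k₁ * φ s * (φ s - s * deriv φ s) = 0

/-- `φ(s) = √(1 + 2ε ∫₀ˢ (1 − k₃ σ⁴)^{1/4} dσ)`. -/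
noncomputable def phi16 (k₃ ε : ℝ) (s : ℝ) : ℝ :=
  Real.sqrt (1 + 2 * ε * ∫ σ in (0:ℝ)..s, (1 - k₃ * σ ^ 4) ^ ((1 : ℝ) / 4))

theorem stmt16 (ε k₃ : ℝ) (hk₃ : k₃ ≠ 0) (a b : ℝ) (ha : a < 0) (hb : 0 < b)
    (hpos : ∀ s ∈ Set.Ioo a b,
      0 < 1 - k₃ * s ^ 4 ∧
      0 < 1 + 2 * ε * ∫ σ in (0:ℝ)..s, (1 - k₃ * σ ^ 4) ^ ((1 : ℝ) / 4)) :
    (∀ s ∈ Set.Ioo a b, eqE 0 0 k₃ (phi16 k₃ ε) s) ∧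
    phi16 k₃ ε 0 = 1 ∧
    deriv (phi16 k₃ ε) 0 = ε := by
  set g : ℝ → ℝ := fun σ => (1 - k₃ * σ ^ 4) ^ ((1:ℝ)/4) with hg_def
  have hgc : Continuous g := by
    apply Continuous.rpow_const (by continuity)
    intro x; right; norm_num
  set Q : ℝ → ℝ := fun s => 1 + 2 * ε * ∫ σ in (0:ℝ)..s, g σ with hQ_def
  have hQd : ∀ s, HasDerivAt Q (2 * ε * g s) s := by
    intro s
    have h1 : HasDerivAt (fun s => ∫ σ in (0:ℝ)..s, g σ) (g s) s :=
      (intervalIntegral.integral_hasDerivAt_right (hgc.intervalIntegrable 0 s)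
        (hgc.stronglyMeasurableAtFilter _ _) hgc.continuousAt)
    exact (h1.const_mul (2*ε)).const_add 1
  set ψ : ℝ → ℝ := fun s => ε * g s / Real.sqrt (Q s) with hψ_def
  have hφd : ∀ s ∈ Set.Ioo a b, HasDerivAt (phi16 k₃ ε) (ψ s) s := by
    intro s hs
    have hQs : 0 < Q s := (hpos s hs).2
    have h := (Real.hasDerivAt_sqrt hQs.ne').comp s (hQd s)
    have hr : Real.sqrt (Q s) ≠ 0 := by positivity
    refine h.congr_deriv ?_
    simp only [hψ_def]; field_simp
  have h0 : (0:ℝ) ∈ Set.Ioo a b := ⟨ha, hb⟩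
  have hphi0 : phi16 k₃ ε 0 = 1 := by
    simp [phi16, intervalIntegral.integral_same]
  have hderiv0 : deriv (phi16 k₃ ε) 0 = ε := by
    rw [(hφd 0 h0).deriv]
    have hQ0 : Q 0 = 1 := by simp [hQ_def, intervalIntegral.integral_same]
    have hg0 : g 0 = 1 := by simp [hg_def]
    simp [hψ_def, hQ0, hg0]
  refine ⟨?_, hphi0, hderiv0⟩
  intro s hs
  obtain ⟨hPs, hQs⟩ := hpos s hs
  have hr : Real.sqrt (Q s) ≠ 0 := by positivity
  have hr2 : Real.sqrt (Q s) ^ 2 = Q s := Real.sq_sqrt hQs.le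
  -- derivative of g at s
  have hPd : HasDerivAt (fun s : ℝ => 1 - k₃ * s ^ 4) (-(k₃ * (4 * s ^ 3))) s := by
    simpa using (((hasDerivAt_pow 4 s).const_mul k₃).const_sub 1)
  set B : ℝ := (1 - k₃ * s ^ 4) ^ ((1:ℝ)/4 - 1) with hB_def
  set A : ℝ := g s with hA_def
  have hgd : HasDerivAt g ((1:ℝ)/4 * B * (-(k₃ * (4 * s ^ 3)))) s := by
    have h := (Real.hasDerivAt_rpow_const (p := (1:ℝ)/4) (Or.inl hPs.ne')).comp s hPd
    exact h
  have key : ∀ x : ℝ, 0 < x → x ^ ((1:ℝ)/4 - 1) * x = x ^ ((1:ℝ)/4) := by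
    intro x hx
    have h := (Real.rpow_add hx ((1:ℝ)/4 - 1) 1).symm
    rw [Real.rpow_one] at h
    have he : ((1:ℝ)/4 - 1) + 1 = (1:ℝ)/4 := by norm_num
    rw [he] at h
    exact h
  have hBA : B * (1 - k₃ * s ^ 4) = A := key _ hPs
  have hψd : HasDerivAt ψ
      ((ε * ((1:ℝ)/4 * B * (-(k₃ * (4 * s ^ 3)))) * Real.sqrt (Q s)
        - ε * A * (ε * A / Real.sqrt (Q s))) / Real.sqrt (Q s) ^ 2) s := by
    have hnum : HasDerivAt (fun s => ε * g s)
        (ε * ((1:ℝ)/4 * B * (-(k₃ * (4 * s ^ 3))))) s := hgd.const_mul ε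
    have hden : HasDerivAt (fun s => Real.sqrt (Q s)) (ε * A / Real.sqrt (Q s)) s := hφd s hs
    exact hnum.div hden hr
  have hd1 : deriv (phi16 k₃ ε) s = ε * A / Real.sqrt (Q s) := (hφd s hs).deriv
  have hd2 : deriv (deriv (phi16 k₃ ε)) s =
      (ε * ((1:ℝ)/4 * B * (-(k₃ * (4 * s ^ 3)))) * Real.sqrt (Q s)
        - ε * A * (ε * A / Real.sqrt (Q s))) / Real.sqrt (Q s) ^ 2 := by
    have hev : deriv (phi16 k₃ ε) =ᶠ[nhds s] ψ := by
      filter_upwards [isOpen_Ioo.mem_nhds hs] with t ht using (hφd t ht).deriv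
    rw [hev.deriv_eq, hψd.deriv]
  have hφs : phi16 k₃ ε s = Real.sqrt (Q s) := rfl
  unfold eqE
  rw [hd1, hd2, hφs, ← hBA]
  set r : ℝ := Real.sqrt (Q s) with hr_def
  field_simp
  ring
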